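/- Let q > 1, γ > 0, F: ℝ₊ → ℝ convex, differentiable on (0,∞) with finite right derivative F'(0), extended by +∞ on negative reals, and let φ(m,w) = F(m) + b̂(m,w). For (m,w) ∈ ℝ × ℝ^4: prox_{γφ}(m,w) = (0,0) if m ≤ γF'(0) and Q_{m,w}(0,0) ≥ 0, and otherwise prox_{γφ}(m,w) = (p*, v_{m,w}(p*,0)) where p* > 0 is the unique solution of Q_{m,w}(p,0) = 0, v_{m,w}(p,δ) = p/(p + γ^{2/q}(q')^{1−2/q}(p + γF'(p) − m + δ)^{1−2/q}) · P_K w, and Q_{m,w}(p,δ) = (p + γF'(p) − m + δ)(p + γ^{2/q}(q')^{1−2/q}(p + γF'(p) − m + δ)^{1−2/q})^q − (γ/q')|P_K w|^q. -/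

import Mathlib

open scoped BigOperators
open Classical

noncomputable section

/-- Euclidean norm on ℝ⁴. -/
def nrm4 (w : Fin 4 → ℝ) : ℝ := Real.sqrt (∑ i, (w i) ^ 2)

/-- The cone `K = ℝ₊ × ℝ₋ × ℝ₊ × ℝ₋`. -/
def Kset : Set (Fin 4 → ℝ) := {w | 0 ≤ w 0 ∧ w 1 ≤ 0 ∧ 0 ≤ w 2 ∧ w 3 ≤ 0}

/-- Euclidean projection onto `K`. -/
def PK (w : Fin 4 → ℝ) : Fin 4 → ℝ := ![max (w 0) 0, min (w 1) 0, max (w 2) 0, min (w 3) 0]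

/-- The cost function `b`. -/
def bfun (q : ℝ) (m : ℝ) (w : Fin 4 → ℝ) : EReal :=
  if 0 < m then (((nrm4 w ^ q) / (q * m ^ (q - 1)) : ℝ) : EReal)
  else if m = 0 ∧ w = 0 then (0 : EReal) else ⊤

/-- `b̂ = b + ι_{ℝ × K}`. -/
def bhat (q : ℝ) (m : ℝ) (w : Fin 4 → ℝ) : EReal :=
  bfun q m w + (if w ∈ Kset then (0 : EReal) else ⊤)

/-- The auxiliary function `Q_{m,w}(p,δ)`. -/
def Qfun (q q' γ : ℝ) (F' : ℝ → ℝ) (m : ℝ) (w : Fin 4 → ℝ) (p δ : ℝ) : ℝ :=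
  (p + γ * F' p - m + δ) *
      (p + γ ^ (2 / q) * q' ^ (1 - 2 / q) * (p + γ * F' p - m + δ) ^ (1 - 2 / q)) ^ q
    - (γ / q') * nrm4 (PK w) ^ q

/-- The auxiliary vector `v_{m,w}(p,δ)`. -/
def vfun (q q' γ : ℝ) (F' : ℝ → ℝ) (m : ℝ) (w : Fin 4 → ℝ) (p δ : ℝ) : Fin 4 → ℝ :=
  fun i =>
    (p / (p + γ ^ (2 / q) * q' ^ (1 - 2 / q) * (p + γ * F' p - m + δ) ^ (1 - 2 / q))) * PK w i

section helpers

lemma nrm4_nonneg (v : Fin 4 → ℝ) : 0 ≤ nrm4 v := Real.sqrt_nonneg _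

lemma nrm4_sq (v : Fin 4 → ℝ) : nrm4 v ^ 2 = ∑ i, (v i) ^ 2 := by
  rw [nrm4, Real.sq_sqrt]; positivity

lemma nrm4_smul (a : ℝ) (ha : 0 ≤ a) (v : Fin 4 → ℝ) :
    nrm4 (fun i => a * v i) = a * nrm4 v := by
  rw [nrm4, nrm4, ← Real.sqrt_sq ha, ← Real.sqrt_mul (by positivity), Finset.mul_sum]
  congr 1; apply Finset.sum_congr rfl; intro i _
  rw [mul_pow, Real.sq_sqrt (by positivity : (0:ℝ) ≤ a^2)]

lemma nrm4_CS (a v : Fin 4 → ℝ) : ∑ i, a i * v i ≤ nrm4 a * nrm4 v :=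
  Real.sum_mul_le_sqrt_mul_sqrt _ _ _

lemma sum_w_PK (w : Fin 4 → ℝ) : ∑ i, w i * PK w i = ∑ i, (PK w i) ^ 2 := by
  have h : ∀ x : ℝ, x * max x 0 = (max x 0) ^ 2 := by
    intro x; rcases le_or_gt x 0 with h | h
    · rw [max_eq_right h]; ring
    · rw [max_eq_left h.le]; ring
  have h' : ∀ x : ℝ, x * min x 0 = (min x 0) ^ 2 := by
    intro x; rcases le_or_gt x 0 with h | h
    · rw [min_eq_left h]; ring
    · rw [min_eq_right h.le]; ring
  simp [Fin.sum_univ_four, PK, h, h']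

lemma sum_PK_sq (w : Fin 4 → ℝ) : ∑ i, (PK w i) ^ 2 = nrm4 (PK w) ^ 2 := (nrm4_sq _).symm

lemma sum_wPK_v_nonpos (w v : Fin 4 → ℝ) (hv : v ∈ Kset) :
    ∑ i, (w i - PK w i) * v i ≤ 0 := by
  obtain ⟨h0, h1, h2, h3⟩ := hv
  have e0 : ∀ x y : ℝ, 0 ≤ y → (x - max x 0) * y ≤ 0 := by
    intro x y hy
    rcases le_or_gt x 0 with h | h
    · rw [max_eq_right h]; exact mul_nonpos_of_nonpos_of_nonneg (by linarith) hy
    · rw [max_eq_left h.le]; simp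
  have e1 : ∀ x y : ℝ, y ≤ 0 → (x - min x 0) * y ≤ 0 := by
    intro x y hy
    rcases le_or_gt x 0 with h | h
    · rw [min_eq_left h]; simp
    · rw [min_eq_right h.le]
      exact mul_nonpos_of_nonneg_of_nonpos (by linarith) hy
  have : ∑ i, (w i - PK w i) * v i =
      (w 0 - max (w 0) 0) * v 0 + (w 1 - min (w 1) 0) * v 1
      + (w 2 - max (w 2) 0) * v 2 + (w 3 - min (w 3) 0) * v 3 := by
    simp [Fin.sum_univ_four, PK]
  rw [this]
  have := e0 (w 0) (v 0) h0
  have := e1 (w 1) (v 1) h1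
  have := e0 (w 2) (v 2) h2
  have := e1 (w 3) (v 3) h3
  linarith

lemma PK_mem_Kset (w : Fin 4 → ℝ) : PK w ∈ Kset := by
  refine ⟨?_, ?_, ?_, ?_⟩ <;> simp [PK]

lemma smul_mem_Kset (a : ℝ) (ha : 0 ≤ a) {v : Fin 4 → ℝ} (hv : v ∈ Kset) :
    (fun i => a * v i) ∈ Kset := by
  obtain ⟨h0, h1, h2, h3⟩ := hv
  exact ⟨mul_nonneg ha h0, mul_nonpos_of_nonneg_of_nonpos ha h1,
    mul_nonneg ha h2, mul_nonpos_of_nonneg_of_nonpos ha h3⟩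

lemma conj_facts {q q' : ℝ} (hq : 1 < q) (hconj : 1 / q + 1 / q' = 1) :
    1 < q' ∧ (q - 1) * q' = q := by
  have hq0 : (0:ℝ) < q := by linarith
  have h1 : 1 / q' = (q - 1) / q := by field_simp at hconj ⊢; linarith
  have hq'0 : 0 < q' := by
    rcases lt_trichotomy q' 0 with h | h | h
    · exfalso; nlinarith [one_div_neg.2 h, div_pos (by linarith : (0:ℝ) < q - 1) hq0]
    · exfalso; rw [h] at h1; simp at h1; nlinarith [div_pos (by linarith : (0:ℝ) < q - 1) hq0]
    · exact h
  constructor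
  · have : 1 / q' < 1 := by rw [h1]; rw [div_lt_one hq0]; linarith
    by_contra h; push_neg at h
    have : 1 ≤ 1 / q' := by
      rw [le_div_iff₀ hq'0]; linarith
    linarith
  · field_simp at h1
    nlinarith

end helpers

section rpowhelp

lemma rpow_inv_self {q : ℝ} (hq : q ≠ 0) {x : ℝ} (hx : 0 ≤ x) : (x ^ (1/q)) ^ q = x := by
  rw [← Real.rpow_mul hx, one_div, inv_mul_cancel₀ hq, Real.rpow_one]

lemma self_mul_rpow {q : ℝ} (hq : 1 < q) {x : ℝ} (hx : 0 ≤ x) : x * x ^ (q-1) = x ^ q := by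
  rcases hx.eq_or_lt with h | h
  · rw [← h, Real.zero_rpow (by linarith : q - 1 ≠ 0), Real.zero_rpow (by linarith : q ≠ 0)]
    ring
  · nth_rewrite 1 [← Real.rpow_one x]
    rw [← Real.rpow_add h]; ring_nf

lemma key_prod {q Cc : ℝ} (hq : 1 < q) (hCc : 0 ≤ Cc) {p b : ℝ} (hp : 0 ≤ p) (hb : 0 ≤ b) :
    b * (p + Cc * b ^ (1-2/q)) ^ q = (p * b ^ (1/q) + Cc * b ^ ((q-1)/q)) ^ q := by
  have hq0 : (0:ℝ) < q := by linarith
  rcases hb.eq_or_lt with h | h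
  · rw [← h]
    rw [Real.zero_rpow (ne_of_gt (div_pos one_pos hq0)),
      Real.zero_rpow (ne_of_gt (div_pos (by linarith) hq0))]
    simp [Real.zero_rpow (by linarith : q ≠ 0)]
  · have hE : 0 ≤ p + Cc * b ^ (1-2/q) := by positivity
    have h1 : b * (p + Cc * b ^ (1-2/q)) ^ q
        = (b ^ (1/q) * (p + Cc * b ^ (1-2/q))) ^ q := by
      rw [Real.mul_rpow (Real.rpow_nonneg hb _) hE, rpow_inv_self (by linarith) hb]
    rw [h1]
    congr 1
    rw [mul_add]
    congr 1
    · ring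
    · rw [mul_comm (b ^ (1/q)) (Cc * b ^ (1-2/q)), mul_assoc, ← Real.rpow_add h]
      congr 2
      field_simp; ring

lemma young_gen {q q' : ℝ} (hq : 1 < q) (hq' : 1 < q') (hconj : 1/q + 1/q' = 1)
    {γ p c t : ℝ} (hγ : 0 < γ) (hp : 0 < p) (hc : 0 ≤ c) (ht : 0 ≤ t) :
    c * t ≤ γ * t ^ q / (q * p ^ (q-1)) + p * (γ ^ (1-q') * c ^ q' / q') := by
  have hq0 : (0:ℝ) < q := by linarith
  have hq'0 : (0:ℝ) < q' := by linarith
  have hcj : Real.HolderConjugate q q' := ⟨by rw [inv_one, ← one_div, ← one_div]; exact hconj, hq0, hq'0⟩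
  have hqq' : (q-1) * q' = q := by
    have h1 : 1/q' = (q-1)/q := by field_simp at hconj ⊢; linarith
    field_simp at h1; nlinarith
  have hP : (0:ℝ) < p ^ (q-1) := Real.rpow_pos_of_pos hp _
  set P := p ^ (q-1) with hPdef
  have key := Real.young_inequality_of_nonneg
    (a := t * (γ/P) ^ (1/q)) (b := c * (P/γ) ^ (1/q))
    (by positivity) (by positivity) hcj
  have e1 : (t * (γ/P) ^ (1/q)) ^ q = t ^ q * (γ/P) := by
    rw [Real.mul_rpow ht (Real.rpow_nonneg (by positivity) _),
      rpow_inv_self (by linarith) (by positivity)]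
  have eqq : (1/q) * q' = q' - 1 := by
    have : q' * (1/q + 1/q') = q' := by rw [hconj]; ring
    field_simp at this ⊢; linarith
  have e2 : (c * (P/γ) ^ (1/q)) ^ q' = c ^ q' * (p / γ ^ (q'-1)) := by
    rw [Real.mul_rpow hc (Real.rpow_nonneg (by positivity) _), ← Real.rpow_mul (by positivity),
      eqq, Real.div_rpow hP.le hγ.le]
    congr 2
    rw [hPdef, ← Real.rpow_mul hp.le]
    have : (q-1) * (q'-1) = 1 := by nlinarith
    rw [this, Real.rpow_one]
  have hXY : (γ/P) ^ (1/q) * (P/γ) ^ (1/q) = 1 := by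
    rw [← Real.mul_rpow (by positivity) (by positivity),
      show γ/P*(P/γ) = 1 by field_simp, Real.one_rpow]
  have e3 : t * (γ/P) ^ (1/q) * (c * (P/γ) ^ (1/q)) = c * t := by
    calc t * (γ/P) ^ (1/q) * (c * (P/γ) ^ (1/q))
        = (c*t) * ((γ/P) ^ (1/q) * (P/γ) ^ (1/q)) := by ring
      _ = c*t := by rw [hXY, mul_one]
  rw [e1, e2, e3] at key
  have hγ' : γ ^ (1-q') = (γ ^ (q'-1))⁻¹ := by
    rw [show (1-q') = -(q'-1) by ring, Real.rpow_neg hγ.le]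
  calc c * t ≤ t ^ q * (γ/P) / q + c ^ q' * (p / γ ^ (q'-1)) / q' := key
    _ = γ * t ^ q / (q * P) + p * (γ ^ (1-q') * c ^ q' / q') := by
        rw [hγ']
        field_simp

end rpowhelp

lemma grad_ineq {Freal F' : ℝ → ℝ}
    (hFconv : ConvexOn ℝ (Set.Ici 0) Freal)
    (hFder : ∀ p ∈ Set.Ici (0:ℝ), HasDerivWithinAt Freal (F' p) (Set.Ici 0) p) :
    ∀ x ∈ Set.Ici (0:ℝ), ∀ y ∈ Set.Ici (0:ℝ), Freal x + F' x * (y - x) ≤ Freal y := by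
  intro x hx y hy
  rcases lt_trichotomy x y with h | h | h
  · have hs := hFconv.le_slope_of_hasDerivWithinAt hx hy h (hFder x hx)
    rw [slope_def_field, le_div_iff₀ (by linarith : (0:ℝ) < y - x)] at hs
    linarith
  · subst h; simp
  · have hs := hFconv.slope_le_of_hasDerivWithinAt hy hx h (hFder x hx)
    rw [slope_def_field] at hs
    have hxy : 0 < x - y := by linarith
    rw [div_le_iff₀ hxy] at hs
    nlinarith

lemma Fp_mono {Freal F' : ℝ → ℝ}
    (hFconv : ConvexOn ℝ (Set.Ici 0) Freal)
    (hFder : ∀ p ∈ Set.Ici (0:ℝ), HasDerivWithinAt Freal (F' p) (Set.Ici 0) p) :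
    MonotoneOn F' (Set.Ici 0) := by
  intro x hx y hy hxy
  rcases hxy.eq_or_lt with h | h
  · rw [h]
  · have h1 := grad_ineq hFconv hFder x hx y hy
    have h2 := grad_ineq hFconv hFder y hy x hx
    nlinarith

lemma B_facts {γ m : ℝ} (hγ : 0 < γ) {Freal F' : ℝ → ℝ}
    (hFconv : ConvexOn ℝ (Set.Ici 0) Freal)
    (hFder : ∀ p ∈ Set.Ici (0:ℝ), HasDerivWithinAt Freal (F' p) (Set.Ici 0) p) :
    StrictMonoOn (fun p => p + γ * F' p - m) (Set.Ici 0) ∧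
    ContinuousOn (fun p => p + γ * F' p - m) (Set.Ici 0) := by
  set B := fun p => p + γ * F' p - m with hBdef
  have hFm := Fp_mono hFconv hFder
  have hmono : StrictMonoOn B (Set.Ici 0) := by
    intro x hx y hy hxy
    have h1 := hFm hx hy hxy.le
    have h2 : γ * F' x ≤ γ * F' y := mul_le_mul_of_nonneg_left h1 hγ.le
    show x + γ * F' x - m < y + γ * F' y - m
    linarith
  -- B is the derivative (within Ici 0) of G
  have hG : ∀ p ∈ Set.Ici (0:ℝ),
      HasDerivWithinAt (fun x => x^2/2 + γ * Freal x - m*x) (B p) (Set.Ici 0) p := by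
    intro p hp
    have h1 : HasDerivWithinAt (fun x : ℝ => x^2/2) p (Set.Ici 0) p := by
      have := ((hasDerivAt_pow 2 p).div_const 2).hasDerivWithinAt (s := Set.Ici 0)
      exact this.congr_deriv (by norm_num)
    have h2 : HasDerivWithinAt (fun x => γ * Freal x) (γ * F' p) (Set.Ici 0) p :=
      (hFder p hp).const_mul γ
    have h3 : HasDerivWithinAt (fun x : ℝ => m * x) m (Set.Ici 0) p := by
      have := (hasDerivAt_id p).const_mul m
      simpa using this.hasDerivWithinAt
    exact (h1.add h2).sub h3
  have himg : Set.OrdConnected (B '' Set.Ici 0) :=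
    Set.OrdConnected.image_hasDerivWithinAt Set.ordConnected_Ici hG
  -- B is unbounded above on Ici 0
  have hub : ∀ y : ℝ, ∃ x ∈ Set.Ici (0:ℝ), y < B x := by
    intro y
    refine ⟨max 0 (y + m - γ * F' 0 + 1), Set.mem_Ici.2 (le_max_left _ _), ?_⟩
    have hx0 : (0:ℝ) ≤ max 0 (y + m - γ * F' 0 + 1) := le_max_left _ _
    have h1 : F' 0 ≤ F' (max 0 (y + m - γ * F' 0 + 1)) :=
      hFm (Set.self_mem_Ici) hx0 hx0
    have h2 : γ * F' 0 ≤ γ * F' (max 0 (y + m - γ * F' 0 + 1)) :=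
      mul_le_mul_of_nonneg_left h1 hγ.le
    have h3 : y + m - γ * F' 0 + 1 ≤ max 0 (y + m - γ * F' 0 + 1) := le_max_right _ _
    show y < max 0 (y + m - γ * F' 0 + 1) + γ * F' (max 0 (y + m - γ * F' 0 + 1)) - m
    linarith
  have hfs_r : ∀ a : ℝ, 0 ≤ a → ∀ b > B a, ∃ c ∈ Set.Ici (0:ℝ), B c ∈ Set.Ioc (B a) b := by
    intro a ha b hb
    obtain ⟨x, hx, hBx⟩ := hub b
    have hmem : b ∈ B '' Set.Ici 0 :=
      himg.out (Set.mem_image_of_mem B ha) (Set.mem_image_of_mem B hx) ⟨hb.le, hBx.le⟩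
    obtain ⟨c, hc, hBc⟩ := hmem
    exact ⟨c, hc, by rw [hBc]; exact ⟨hb, le_refl b⟩⟩
  have hcont : ContinuousOn B (Set.Ici 0) := by
    intro a ha
    rcases (Set.mem_Ici.1 ha).eq_or_lt with h0 | h0
    · -- a = 0
      subst h0
      exact StrictMonoOn.continuousWithinAt_right_of_exists_between hmono
        self_mem_nhdsWithin (hfs_r 0 le_rfl)
    · -- 0 < a
      have hnb : Set.Ici (0:ℝ) ∈ nhds a := Ici_mem_nhds h0
      have hfs_l : ∀ b < B a, ∃ c ∈ Set.Ici (0:ℝ), B c ∈ Set.Ico b (B a) := by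
        intro b hb
        have hBa : B 0 < B a := hmono Set.self_mem_Ici ha h0
        rcases le_or_gt b (B 0) with h | h
        · exact ⟨0, Set.self_mem_Ici, ⟨h, hBa⟩⟩
        · have hmem : b ∈ B '' Set.Ici 0 :=
            himg.out (Set.mem_image_of_mem B Set.self_mem_Ici)
              (Set.mem_image_of_mem B ha) ⟨h.le, hb.le⟩
          obtain ⟨c, hc, hBc⟩ := hmem
          exact ⟨c, hc, by rw [hBc]; exact ⟨le_refl b, hb⟩⟩
      exact (StrictMonoOn.continuousAt_of_exists_between hmono hnb hfs_l
        (hfs_r a h0.le)).continuousWithinAt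
  exact ⟨hmono, hcont⟩

set_option maxHeartbeats 1000000 in
lemma key_min {q q' γ m : ℝ} (hq : 1 < q) (hq' : 1 < q') (hconj : 1/q + 1/q' = 1)
    (hγ : 0 < γ) {Freal F' : ℝ → ℝ}
    (hgrad : ∀ x ∈ Set.Ici (0:ℝ), ∀ y ∈ Set.Ici (0:ℝ), Freal x + F' x * (y - x) ≤ Freal y)
    (w : Fin 4 → ℝ) {s lam : ℝ} (hs : 0 < s) (hlam0 : 0 ≤ lam) (hlam1 : lam ≤ 1)
    (hii : s + γ * F' s - m = γ * (lam * nrm4 (PK w)) ^ q / (q' * s ^ q))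
    (hiii : (1 - lam) * nrm4 (PK w) = γ * (lam * nrm4 (PK w)) ^ (q-1) / s ^ (q-1))
    {p : ℝ} {v : Fin 4 → ℝ} (hp : 0 ≤ p) (hv : v ∈ Kset) (hpv : p = 0 → v = 0) :
    γ * ((lam * nrm4 (PK w)) ^ q / (q * s ^ (q-1)) + Freal s)
      + ((m - s) ^ 2 + ∑ i, (w i - lam * PK w i) ^ 2) / 2
    ≤ γ * (nrm4 v ^ q / (q * p ^ (q-1)) + Freal p)
      + ((m - p) ^ 2 + ∑ i, (w i - v i) ^ 2) / 2 := by
  have hq0 : (0:ℝ) < q := by linarith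
  have hq'0 : (0:ℝ) < q' := by linarith
  have hqq' : (q-1) * q' = q := by
    have hA : 1/q' = (q-1)/q := by field_simp at hconj ⊢; linarith
    field_simp at hA; nlinarith
  set c := nrm4 (PK w) with hcdef
  have hc : 0 ≤ c := nrm4_nonneg _
  set t := lam * c with htdef
  have ht : 0 ≤ t := mul_nonneg hlam0 hc
  set r := nrm4 v with hrdef
  have hr : 0 ≤ r := nrm4_nonneg _
  have hsq1 : (0:ℝ) < s ^ (q-1) := Real.rpow_pos_of_pos hs _
  have hsq : (0:ℝ) < s ^ q := Real.rpow_pos_of_pos hs _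
  -- gradient inequality, scaled
  have h1 : γ * Freal s + γ * (F' s * (p - s)) ≤ γ * Freal p := by
    have := mul_le_mul_of_nonneg_left
      (hgrad s (Set.mem_Ici.2 hs.le) p (Set.mem_Ici.2 hp)) hγ.le
    rw [mul_add] at this; exact this
  -- sum expansions
  have h2 : ∑ i, (w i - v i) ^ 2 = (∑ i, (w i - lam * PK w i) ^ 2)
      + 2 * (∑ i, (w i - lam * PK w i) * (lam * PK w i - v i))
      + ∑ i, (lam * PK w i - v i) ^ 2 := by
    simp only [Fin.sum_univ_four]; ring
  have h2' : (0:ℝ) ≤ ∑ i, (lam * PK w i - v i) ^ 2 :=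
    Finset.sum_nonneg fun i _ => sq_nonneg _
  have hsplit : ∑ i, (w i - lam * PK w i) * (lam * PK w i - v i)
      = (∑ i, (w i - lam * PK w i) * (lam * PK w i))
        - ∑ i, (w i - lam * PK w i) * v i := by
    simp only [Fin.sum_univ_four]; ring
  have h3 : ∑ i, (w i - lam * PK w i) * (lam * PK w i) = lam * (1 - lam) * c ^ 2 := by
    have e : ∑ i, (w i - lam * PK w i) * (lam * PK w i)
        = lam * (∑ i, w i * PK w i) - lam ^ 2 * ∑ i, (PK w i) ^ 2 := by
      simp only [Fin.sum_univ_four]; ring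
    rw [e, sum_w_PK, ← nrm4_sq, ← hcdef]; ring
  have h4 : ∑ i, (w i - lam * PK w i) * v i ≤ (1 - lam) * (c * r) := by
    have e : ∑ i, (w i - lam * PK w i) * v i
        = (∑ i, (w i - PK w i) * v i) + (1 - lam) * ∑ i, PK w i * v i := by
      simp only [Fin.sum_univ_four]; ring
    rw [e]
    have b1 := sum_wPK_v_nonpos w v hv
    have b2 : (1 - lam) * (∑ i, PK w i * v i) ≤ (1 - lam) * (c * r) :=
      mul_le_mul_of_nonneg_left (nrm4_CS _ _) (by linarith)
    linarith
  -- quadratic expansion in m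
  have h5 : (m - p) ^ 2 = (m - s) ^ 2 + 2 * ((m - s) * (s - p)) + (s - p) ^ 2 := by ring
  have h5' : (0:ℝ) ≤ (s - p) ^ 2 := sq_nonneg _
  -- identities from hii / hiii
  have hX : (p - s) * (s + γ * F' s - m) = γ * (F' s * (p - s)) + (m - s) * (s - p) := by ring
  have hprod : (p - s) * (s + γ * F' s - m)
      = p * (γ * t ^ q / (q' * s ^ q)) - s * (γ * t ^ q / (q' * s ^ q)) := by
    rw [hii]; ring
  have hsX : s * (γ * t ^ q / (q' * s ^ q)) = γ * t ^ q / (q' * s ^ (q-1)) := by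
    rw [← self_mul_rpow hq hs.le]; field_simp
  have h6 : lam * (1 - lam) * c ^ 2 = γ * t ^ q / s ^ (q-1) := by
    have e : lam * (1 - lam) * c ^ 2 = ((1 - lam) * c) * t := by rw [htdef]; ring
    rw [e, hiii, htdef]
    rw [div_mul_eq_mul_div, mul_comm (γ * (lam * c) ^ (q-1)) (lam * c), ← mul_assoc]
    rw [mul_comm (lam * c) γ, mul_assoc, self_mul_rpow hq (mul_nonneg hlam0 hc)]
  have h7 : (1 - lam) * (c * r) = γ * (t ^ (q-1) * r) / s ^ (q-1) := by
    have e : (1 - lam) * (c * r) = ((1 - lam) * c) * r := by ring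
    rw [e, hiii, htdef]; ring
  -- Young/star inequality
  have star : γ * (t ^ (q-1) * r) / s ^ (q-1)
      ≤ γ * (r ^ q / (q * p ^ (q-1))) + p * (γ * t ^ q / (q' * s ^ q)) := by
    rcases hp.eq_or_lt with h0 | h0
    · have hv0 : v = 0 := hpv h0.symm
      have hr0 : r = 0 := by rw [hrdef, hv0]; simp [nrm4]
      rw [hr0, ← h0, Real.zero_rpow (by linarith : q ≠ 0)]
      simp
    · have Y := young_gen hq hq' hconj (γ := 1) (p := p) (c := (t/s) ^ (q-1)) (t := r)
        one_pos h0 (Real.rpow_nonneg (by positivity) _) hr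
      have e1 : ((t/s) ^ (q-1)) ^ q' = (t/s) ^ q := by
        rw [← Real.rpow_mul (div_nonneg ht hs.le), hqq']
      have e2 : (t/s) ^ (q-1) = t ^ (q-1) / s ^ (q-1) := Real.div_rpow ht hs.le _
      have e3 : (t/s) ^ q = t ^ q / s ^ q := Real.div_rpow ht hs.le _
      calc γ * (t ^ (q-1) * r) / s ^ (q-1) = γ * ((t/s) ^ (q-1) * r) := by rw [e2]; ring
        _ ≤ γ * (1 * r ^ q / (q * p ^ (q-1)) + p * (1 ^ (1-q') * ((t/s) ^ (q-1)) ^ q' / q')) :=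
            mul_le_mul_of_nonneg_left Y hγ.le
        _ = γ * (r ^ q / (q * p ^ (q-1))) + p * (γ * t ^ q / (q' * s ^ q)) := by
            rw [Real.one_rpow, e1, e3]; ring
  -- the zero identity
  have hzero : γ * (t ^ q / (q * s ^ (q-1))) + γ * t ^ q / (q' * s ^ (q-1))
      = γ * t ^ q / s ^ (q-1) := by
    have e : γ * (t ^ q / (q * s ^ (q-1))) + γ * t ^ q / (q' * s ^ (q-1))
        = (γ * t ^ q / s ^ (q-1)) * (1/q + 1/q') := by
      field_simp
    rw [e, hconj, mul_one]
  rw [mul_add γ, mul_add γ]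
  linarith [h1, h2, h2', hsplit, h3, h4, h5, h5', hX, hprod, hsX, h6, h7, star, hzero]

set_option maxHeartbeats 1000000 in
lemma exists_root {q q' γ m : ℝ} (hq : 1 < q) (hq' : 1 < q') (hconj : 1/q + 1/q' = 1)
    (hγ : 0 < γ) {Freal F' : ℝ → ℝ}
    (hFconv : ConvexOn ℝ (Set.Ici 0) Freal)
    (hFder : ∀ p ∈ Set.Ici (0:ℝ), HasDerivWithinAt Freal (F' p) (Set.Ici 0) p)
    (w : Fin 4 → ℝ)
    (hneg : ¬ (m ≤ γ * F' 0 ∧ 0 ≤ Qfun q q' γ F' m w 0 0)) :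
    ∃ p : ℝ, 0 < p ∧ m ≤ p + γ * F' p ∧ Qfun q q' γ F' m w p 0 = 0 ∧
      (∀ p' : ℝ, 0 ≤ p' → m ≤ p' + γ * F' p' → Qfun q q' γ F' m w p' 0 = 0 → p' = p) := by
  have hq0 : (0:ℝ) < q := by linarith
  have hq'0 : (0:ℝ) < q' := by linarith
  set c := nrm4 (PK w) with hcdef
  have hc : 0 ≤ c := nrm4_nonneg _
  set T := γ / q' * c ^ q with hTdef
  have hT : 0 ≤ T := mul_nonneg (by positivity) (Real.rpow_nonneg hc _)
  set Cc := γ ^ (2/q) * q' ^ (1 - 2/q) with hCcdef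
  have hCc : 0 < Cc := mul_pos (Real.rpow_pos_of_pos hγ _) (Real.rpow_pos_of_pos hq'0 _)
  set B := fun p => p + γ * F' p - m with hBdef
  obtain ⟨hBmono, hBcont⟩ := B_facts (m := m) hγ hFconv hFder
  set hn := fun p => (p * (B p) ^ (1/q) + Cc * (B p) ^ ((q-1)/q)) ^ q with hndef
  have hQeq : ∀ p : ℝ, 0 ≤ p → 0 ≤ B p → Qfun q q' γ F' m w p 0 = hn p - T := by
    intro p hp hBp
    have : Qfun q q' γ F' m w p 0 = B p * (p + Cc * (B p) ^ (1-2/q)) ^ q - T := by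
      simp only [Qfun, hBdef, hCcdef, hTdef, hcdef, add_zero]
    rw [this, key_prod hq hCc.le hp hBp]
  -- continuity of hn on Ici 0
  have hncont : ContinuousOn hn (Set.Ici 0) := by
    have c1 : ContinuousOn (fun p => (B p) ^ (1/q)) (Set.Ici 0) :=
      hBcont.rpow_const (fun x _ => Or.inr (div_pos one_pos hq0).le)
    have c2 : ContinuousOn (fun p => (B p) ^ ((q-1)/q)) (Set.Ici 0) :=
      hBcont.rpow_const (fun x _ => Or.inr (div_nonneg (by linarith) hq0.le))
    exact ((continuousOn_id.mul c1).add (continuousOn_const.mul c2)).rpow_const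
      (fun x _ => Or.inr hq0.le)
  -- strict increase of hn where B ≥ 0
  have hnlt : ∀ x ∈ Set.Ici (0:ℝ), ∀ y ∈ Set.Ici (0:ℝ), 0 ≤ B x → x < y → hn x < hn y := by
    intro x hx y hy hBx hxy
    have hBxy : B x < B y := hBmono hx hy hxy
    have hBy : 0 < B y := lt_of_le_of_lt hBx hBxy
    have t1 : x * (B x) ^ (1/q) ≤ y * (B y) ^ (1/q) :=
      mul_le_mul hxy.le (Real.rpow_le_rpow hBx hBxy.le (div_pos one_pos hq0).le)
        (Real.rpow_nonneg hBx _) (by linarith [Set.mem_Ici.1 hx])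
    have t2 : Cc * (B x) ^ ((q-1)/q) < Cc * (B y) ^ ((q-1)/q) :=
      mul_lt_mul_of_pos_left
        (Real.rpow_lt_rpow hBx hBxy (div_pos (by linarith) hq0)) hCc
    have hinner : x * (B x) ^ (1/q) + Cc * (B x) ^ ((q-1)/q)
        < y * (B y) ^ (1/q) + Cc * (B y) ^ ((q-1)/q) := by linarith
    exact Real.rpow_lt_rpow
      (add_nonneg (mul_nonneg (Set.mem_Ici.1 hx) (Real.rpow_nonneg hBx _))
        (mul_nonneg hCc.le (Real.rpow_nonneg hBx _))) hinner hq0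
  -- upper bound machinery
  have hFm := Fp_mono hFconv hFder
  have hub : ∀ y : ℝ, ∃ x ∈ Set.Ici (0:ℝ), y < B x := by
    intro y
    refine ⟨max 0 (y + m - γ * F' 0 + 1), Set.mem_Ici.2 (le_max_left _ _), ?_⟩
    have hx0 : (0:ℝ) ≤ max 0 (y + m - γ * F' 0 + 1) := le_max_left _ _
    have h1 : F' 0 ≤ F' (max 0 (y + m - γ * F' 0 + 1)) := hFm Set.self_mem_Ici hx0 hx0
    have h2 : γ * F' 0 ≤ γ * F' (max 0 (y + m - γ * F' 0 + 1)) :=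
      mul_le_mul_of_nonneg_left h1 hγ.le
    have h3 : y + m - γ * F' 0 + 1 ≤ max 0 (y + m - γ * F' 0 + 1) := le_max_right _ _
    show y < max 0 (y + m - γ * F' 0 + 1) + γ * F' (max 0 (y + m - γ * F' 0 + 1)) - m
    linarith
  have hnub : ∀ a : ℝ, 0 ≤ a → ∃ M, a ≤ M ∧ T ≤ hn M := by
    intro a ha
    obtain ⟨x₀, hx₀, hBx₀⟩ := hub 1
    refine ⟨max (max a x₀) (T ^ (1/q)), le_trans (le_max_left a x₀) (le_max_left _ _), ?_⟩
    set M := max (max a x₀) (T ^ (1/q)) with hMdef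
    have hM0 : 0 ≤ M := le_trans ha (le_trans (le_max_left a x₀) (le_max_left _ _))
    have hMT : T ^ (1/q) ≤ M := le_max_right _ _
    have hBM : 1 ≤ B M := by
      have : B x₀ ≤ B M := (hBmono.monotoneOn) hx₀
        (Set.mem_Ici.2 hM0) (le_trans (le_max_right a x₀) (le_max_left _ _))
      linarith
    have hBM0 : (0:ℝ) ≤ B M := by linarith
    have h1 : (1:ℝ) ≤ (B M) ^ (1/q) := by
      have := Real.rpow_le_rpow (by norm_num : (0:ℝ) ≤ 1) hBM (div_pos one_pos hq0).le
      rwa [Real.one_rpow] at this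
    have hTM : T ^ (1/q) ≤ M * (B M) ^ (1/q) + Cc * (B M) ^ ((q-1)/q) := by
      have : M * 1 ≤ M * (B M) ^ (1/q) := mul_le_mul_of_nonneg_left h1 hM0
      have h2 : 0 ≤ Cc * (B M) ^ ((q-1)/q) := mul_nonneg hCc.le (Real.rpow_nonneg hBM0 _)
      linarith
    calc T = (T ^ (1/q)) ^ q := (rpow_inv_self (by linarith) hT).symm
      _ ≤ (M * (B M) ^ (1/q) + Cc * (B M) ^ ((q-1)/q)) ^ q :=
          Real.rpow_le_rpow (Real.rpow_nonneg hT _) hTM hq0.le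
  -- produce the root
  have main : ∃ p : ℝ, 0 < p ∧ 0 ≤ B p ∧ hn p = T := by
    by_cases hm : m ≤ γ * F' 0
    · have hQ0 : Qfun q q' γ F' m w 0 0 < 0 := by
        rcases not_and_or.1 hneg with h | h
        · exact absurd hm h
        · exact lt_of_not_ge h
      have hB0 : 0 ≤ B 0 := by show 0 ≤ 0 + γ * F' 0 - m; linarith
      have hhn0 : hn 0 < T := by
        have := hQeq 0 le_rfl hB0
        -- Qfun 0 0 vs Qfun 0 0 : the δ is 0 in both
        rw [this] at hQ0
        linarith
      obtain ⟨M, hM, hTM⟩ := hnub 0 le_rfl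
      have hsub : Set.Icc (0:ℝ) M ⊆ Set.Ici 0 := fun x hx => hx.1
      have := intermediate_value_Icc hM (hncont.mono hsub)
      obtain ⟨p, hpIcc, hpT⟩ := this ⟨hhn0.le, hTM⟩
      have hppos : 0 < p := by
        rcases hpIcc.1.eq_or_lt with h | h
        · exfalso; rw [← h] at hpT; linarith
        · exact h
      exact ⟨p, hppos, le_trans hB0 ((hBmono.monotoneOn) Set.self_mem_Ici
        (Set.mem_Ici.2 hppos.le) hppos.le), hpT⟩
    · have hB0 : B 0 < 0 := by show 0 + γ * F' 0 - m < 0; push_neg at hm; linarith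
      obtain ⟨x₀, hx₀, hBx₀⟩ := hub 0
      have hx₀0 : (0:ℝ) ≤ x₀ := hx₀
      have hsub : Set.Icc (0:ℝ) x₀ ⊆ Set.Ici 0 := fun x hx => hx.1
      obtain ⟨p₀, hp₀Icc, hp₀⟩ := intermediate_value_Icc
        (by linarith : (0:ℝ) ≤ x₀) (hBcont.mono hsub) ⟨hB0.le, hBx₀.le⟩
      have hp₀pos : 0 < p₀ := by
        rcases hp₀Icc.1.eq_or_lt with h | h
        · exfalso; rw [← h] at hp₀; linarith
        · exact h
      have hhn0 : hn p₀ = 0 := by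
        have hBp₀ : B p₀ = 0 := hp₀
        simp only [hndef]
        rw [hBp₀]
        rw [Real.zero_rpow (ne_of_gt (div_pos one_pos hq0)),
          Real.zero_rpow (ne_of_gt (div_pos (by linarith) hq0))]
        rw [mul_zero, mul_zero, add_zero, Real.zero_rpow (by linarith : q ≠ 0)]
      obtain ⟨M, hM, hTM⟩ := hnub p₀ hp₀pos.le
      have hsub2 : Set.Icc p₀ M ⊆ Set.Ici 0 := fun x hx => le_trans hp₀pos.le hx.1
      obtain ⟨p, hpIcc, hpT⟩ := intermediate_value_Icc hM (hncont.mono hsub2)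
        ⟨by rw [hhn0]; exact hT, hTM⟩
      refine ⟨p, lt_of_lt_of_le hp₀pos hpIcc.1, ?_, hpT⟩
      have : B p₀ ≤ B p := (hBmono.monotoneOn) (Set.mem_Ici.2 hp₀pos.le)
        (Set.mem_Ici.2 (le_trans hp₀pos.le hpIcc.1)) hpIcc.1
      linarith [hp₀]
  obtain ⟨p, hppos, hBp, hpT⟩ := main
  refine ⟨p, hppos, by show m ≤ p + γ * F' p; have := hBp; simp only [hBdef] at this; linarith,
    by rw [hQeq p hppos.le hBp, hpT]; ring, ?_⟩
  intro p' hp' hmp' hQp'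
  have hBp' : 0 ≤ B p' := by show 0 ≤ p' + γ * F' p' - m; linarith
  have hp'T : hn p' = T := by
    have := hQeq p' hp' hBp'
    rw [hQp'] at this; linarith
  rcases lt_trichotomy p' p with h | h | h
  · exfalso
    have := hnlt p' (Set.mem_Ici.2 hp') p (Set.mem_Ici.2 hppos.le) hBp' h
    rw [hp'T, hpT] at this; exact lt_irrefl _ this
  · exact h
  · exfalso
    have := hnlt p (Set.mem_Ici.2 hppos.le) p' (Set.mem_Ici.2 hp') hBp h
    rw [hp'T, hpT] at this; exact lt_irrefl _ this

set_option maxHeartbeats 1000000 in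
lemma root_facts {q q' γ m : ℝ} (hq : 1 < q) (hq' : 1 < q') (hconj : 1/q + 1/q' = 1)
    (hγ : 0 < γ) {F' : ℝ → ℝ} (w : Fin 4 → ℝ) {s : ℝ} (hs : 0 < s)
    (hB : 0 ≤ s + γ * F' s - m)
    (hroot : Qfun q q' γ F' m w s 0 = 0) :
    ∃ lam : ℝ, 0 ≤ lam ∧ lam ≤ 1 ∧
      (vfun q q' γ F' m w s 0 = fun i => lam * PK w i) ∧
      s + γ * F' s - m = γ * (lam * nrm4 (PK w)) ^ q / (q' * s ^ q) ∧
      (1 - lam) * nrm4 (PK w) = γ * (lam * nrm4 (PK w)) ^ (q-1) / s ^ (q-1) := by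
  have hq0 : (0:ℝ) < q := by linarith
  have hq'0 : (0:ℝ) < q' := by linarith
  set c := nrm4 (PK w) with hcdef
  have hc : 0 ≤ c := nrm4_nonneg _
  set b := s + γ * F' s - m with hbdef
  set Cc := γ ^ (2/q) * q' ^ (1 - 2/q) with hCcdef
  have hCc : 0 < Cc := mul_pos (Real.rpow_pos_of_pos hγ _) (Real.rpow_pos_of_pos hq'0 _)
  set E := s + Cc * b ^ (1 - 2/q) with hEdef
  have hE : 0 < E := add_pos_of_pos_of_nonneg hs
    (mul_nonneg hCc.le (Real.rpow_nonneg hB _))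
  set lam := s / E with hlamdef
  have hlam0 : 0 ≤ lam := div_nonneg hs.le hE.le
  have hlam1 : lam ≤ 1 := by
    rw [hlamdef, div_le_one hE, hEdef]
    have : 0 ≤ Cc * b ^ (1 - 2/q) := mul_nonneg hCc.le (Real.rpow_nonneg hB _)
    linarith
  have hvfun : vfun q q' γ F' m w s 0 = fun i => lam * PK w i := by
    funext i
    simp only [vfun, add_zero, hlamdef, hEdef, hCcdef, hbdef]
  have hbE : b * E ^ q = γ / q' * c ^ q := by
    have : Qfun q q' γ F' m w s 0 = b * E ^ q - γ / q' * c ^ q := by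
      simp only [Qfun, hbdef, hEdef, hCcdef, hcdef, add_zero]
    rw [this] at hroot; linarith
  have hsq : (0:ℝ) < s ^ q := Real.rpow_pos_of_pos hs _
  have hEq : (0:ℝ) < E ^ q := Real.rpow_pos_of_pos hE _
  have hlamq : (lam * c) ^ q = s ^ q * c ^ q / E ^ q := by
    rw [Real.mul_rpow hlam0 hc, hlamdef, Real.div_rpow hs.le hE.le]; ring
  have hbE' : b * E ^ q * q' = γ * c ^ q := by
    field_simp [hq'0.ne'] at hbE
    linarith
  have hii : b = γ * (lam * c) ^ q / (q' * s ^ q) := by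
    rw [hlamq]
    rw [eq_div_iff (ne_of_gt (mul_pos hq'0 hsq))]
    rw [← mul_div_assoc, eq_div_iff hEq.ne']
    linear_combination (s ^ q) * hbE'
  refine ⟨lam, hlam0, hlam1, hvfun, hii, ?_⟩
  -- hiii
  rcases hc.eq_or_lt with hc0 | hc0
  · have hlc : lam * c = 0 := by rw [← hc0]; ring
    rw [hlc, Real.zero_rpow (by linarith : q - 1 ≠ 0), ← hc0]
    ring
  · -- c > 0, hence b > 0
    have hb0 : 0 < b := by
      rcases hB.eq_or_lt with h | h
      · exfalso
        rw [← h] at hbE'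
        have hpos : 0 < γ * c ^ q := mul_pos hγ (Real.rpow_pos_of_pos hc0 _)
        rw [zero_mul, zero_mul] at hbE'
        linarith
      · exact h
    set e := 1 - 2/q with hedef
    have hqe : q * e = q - 2 := by rw [hedef]; field_simp
    have hEq2 : (0:ℝ) < E ^ (q-2) := Real.rpow_pos_of_pos hE _
    have hstar : γ * c ^ (q - 2) = Cc * b ^ e * E ^ (q - 2) := by
      have h1 : c ^ q = q' * b * E ^ q / γ := by
        rw [eq_div_iff hγ.ne']
        linear_combination -hbE'
      have h2 : c ^ (q - 2) = (c ^ q) ^ e := by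
        rw [← Real.rpow_mul hc, hqe]
      have h3 : (q' * b * E ^ q / γ) ^ e = q' ^ e * b ^ e * E ^ (q-2) / γ ^ e := by
        rw [Real.div_rpow (by positivity) hγ.le,
          Real.mul_rpow (mul_nonneg hq'0.le hb0.le) (Real.rpow_nonneg hE.le _),
          Real.mul_rpow hq'0.le hb0.le, ← Real.rpow_mul hE.le, hqe]
      have hCc2 : Cc = γ ^ (1-e) * q' ^ e := by
        rw [hCcdef, show (2:ℝ)/q = 1 - e from by rw [hedef]; ring]
      have hγe : (0:ℝ) < γ ^ e := Real.rpow_pos_of_pos hγ _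
      calc γ * c ^ (q-2) = γ * (q' ^ e * b ^ e * E ^ (q-2) / γ ^ e) := by
            rw [h2, h1, h3]
        _ = (γ ^ (1:ℝ) / γ ^ e) * q' ^ e * b ^ e * E ^ (q-2) := by
            rw [Real.rpow_one]; ring
        _ = Cc * b ^ e * E ^ (q-2) := by
            rw [← Real.rpow_sub hγ, hCc2]
    -- final computation for hiii
    have hrw : (lam * c) ^ (q-1) = s ^ (q-1) / E ^ (q-1) * c ^ (q-1) := by
      rw [Real.mul_rpow hlam0 hc, hlamdef, Real.div_rpow hs.le hE.le]
    have hsq1 : (0:ℝ) < s ^ (q-1) := Real.rpow_pos_of_pos hs _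
    have hEq1 : (0:ℝ) < E ^ (q-1) := Real.rpow_pos_of_pos hE _
    have hE12 : E ^ (q-1) = E ^ (q-2) * E := by
      nth_rewrite 3 [← Real.rpow_one E]
      rw [← Real.rpow_add hE]; congr 1; ring
    have hc12 : c ^ (q-1) = c ^ (q-2) * c := by
      nth_rewrite 3 [← Real.rpow_one c]
      rw [← Real.rpow_add hc0]; congr 1; ring
    have h1lam : 1 - lam = Cc * b ^ e / E := by
      rw [hlamdef, eq_div_iff hE.ne']
      have : E = s + Cc * b ^ e := by rw [hEdef, hedef]
      rw [this] at *
      field_simp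
      ring
    have hfin : γ * (lam * c) ^ (q-1) / s ^ (q-1) = Cc * b ^ e / E * c := by
      calc γ * (lam * c) ^ (q-1) / s ^ (q-1)
          = γ * (s ^ (q-1) / E ^ (q-1) * c ^ (q-1)) / s ^ (q-1) := by rw [hrw]
        _ = γ * c ^ (q-1) / E ^ (q-1) := by
            field_simp
        _ = γ * c ^ (q-2) * c / (E ^ (q-2) * E) := by rw [hc12, hE12]; ring
        _ = Cc * b ^ e * E ^ (q-2) * c / (E ^ (q-2) * E) := by rw [hstar]
        _ = Cc * b ^ e / E * c := by
            field_simp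
    rw [hfin, h1lam]

set_option maxHeartbeats 1000000 in
lemma part1_bound {q q' γ m : ℝ} (hq : 1 < q) (hq' : 1 < q') (hconj : 1/q + 1/q' = 1)
    (hγ : 0 < γ) {F' : ℝ → ℝ} (w : Fin 4 → ℝ)
    (hm : m ≤ γ * F' 0) (hQ : 0 ≤ Qfun q q' γ F' m w 0 0) :
    γ ^ (1-q') * (nrm4 (PK w)) ^ q' / q' ≤ γ * F' 0 - m := by
  have hq0 : (0:ℝ) < q := by linarith
  have hq'0 : (0:ℝ) < q' := by linarith
  have hq1 : (0:ℝ) < q - 1 := by linarith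
  have hqq' : (q - 1) * q' = q := by
    have hA : 1/q' = (q-1)/q := by field_simp at hconj ⊢; linarith
    field_simp at hA; nlinarith
  set c := nrm4 (PK w) with hcdef
  have hc : 0 ≤ c := nrm4_nonneg _
  set A := γ * F' 0 - m with hAdef
  have hA : 0 ≤ A := by rw [hAdef]; linarith
  set Cc := γ ^ (2/q) * q' ^ (1 - 2/q) with hCcdef
  have hCc : 0 < Cc := mul_pos (Real.rpow_pos_of_pos hγ _) (Real.rpow_pos_of_pos hq'0 _)
  have hQ0 : γ / q' * c ^ q ≤ A * (0 + Cc * A ^ (1 - 2/q)) ^ q := by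
    have : Qfun q q' γ F' m w 0 0
        = A * (0 + Cc * A ^ (1 - 2/q)) ^ q - γ / q' * c ^ q := by
      simp only [Qfun, hAdef, hCcdef, hcdef, add_zero, zero_add]
    rw [this] at hQ; linarith
  rw [key_prod hq hCc.le le_rfl hA, zero_mul, zero_add] at hQ0
  have hCcq : (Cc * A ^ ((q-1)/q)) ^ q = γ ^ (2:ℝ) * q' ^ (q-2) * A ^ (q-1) := by
    rw [Real.mul_rpow hCc.le (Real.rpow_nonneg hA _), hCcdef,
      Real.mul_rpow (Real.rpow_nonneg hγ.le _) (Real.rpow_nonneg hq'0.le _),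
      ← Real.rpow_mul hγ.le, ← Real.rpow_mul hq'0.le, ← Real.rpow_mul hA]
    rw [show 2/q * q = (2:ℝ) by field_simp, show (1 - 2/q) * q = q - 2 by field_simp,
      show (q-1)/q * q = q - 1 by field_simp]
  rw [hCcq] at hQ0
  -- so c ^ q ≤ γ * q' ^ (q-1) * A ^ (q-1)
  have h1 : c ^ q ≤ γ * q' ^ (q-1) * A ^ (q-1) := by
    have h2 : q' * (γ / q' * c ^ q) ≤ q' * (γ ^ (2:ℝ) * q' ^ (q-2) * A ^ (q-1)) :=
      mul_le_mul_of_nonneg_left hQ0 hq'0.le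
    have e1 : q' * (γ / q' * c ^ q) = γ * c ^ q := by field_simp
    have e2 : q' * (γ ^ (2:ℝ) * q' ^ (q-2) * A ^ (q-1)) = γ ^ (2:ℝ) * q' ^ (q-1) * A ^ (q-1) := by
      have : q' * q' ^ (q-2) = q' ^ (q-1) := by
        nth_rewrite 1 [← Real.rpow_one q']
        rw [← Real.rpow_add hq'0]; congr 1; ring
      rw [← this]; ring
    rw [e1, e2] at h2
    have e3 : γ ^ (2:ℝ) = γ * γ := by
      rw [show (2:ℝ) = 1 + 1 by norm_num, Real.rpow_add hγ, Real.rpow_one]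
    rw [e3] at h2
    nlinarith [h2, hγ]
  -- raise to power 1/(q-1)
  have h3 : (c ^ q) ^ (1/(q-1)) ≤ (γ * q' ^ (q-1) * A ^ (q-1)) ^ (1/(q-1)) :=
    Real.rpow_le_rpow (Real.rpow_nonneg hc _) h1 (by positivity)
  have e4 : (c ^ q) ^ (1/(q-1)) = c ^ q' := by
    rw [← Real.rpow_mul hc]
    congr 1
    field_simp
    nlinarith
  have e5 : (γ * q' ^ (q-1) * A ^ (q-1)) ^ (1/(q-1))
      = γ ^ (q'-1) * q' * A := by
    rw [Real.mul_rpow (mul_nonneg hγ.le (Real.rpow_nonneg hq'0.le _)) (Real.rpow_nonneg hA _),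
      Real.mul_rpow hγ.le (Real.rpow_nonneg hq'0.le _),
      ← Real.rpow_mul hq'0.le, ← Real.rpow_mul hA,
      show (q-1) * (1/(q-1)) = 1 by field_simp, Real.rpow_one, Real.rpow_one]
    congr 2
    have : q' - 1 = 1/(q-1) := by
      field_simp
      nlinarith
    rw [this]
  rw [e4, e5] at h3
  -- multiply by γ^(1-q')/q'
  have h4 : γ ^ (1-q') * c ^ q' ≤ γ ^ (1-q') * (γ ^ (q'-1) * q' * A) :=
    mul_le_mul_of_nonneg_left h3 (Real.rpow_nonneg hγ.le _)
  have e6 : γ ^ (1-q') * (γ ^ (q'-1) * q' * A) = q' * A := by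
    rw [← mul_assoc, ← mul_assoc, ← Real.rpow_add hγ]
    norm_num
  rw [e6] at h4
  rw [div_le_iff₀ hq'0]
  linarith

set_option maxHeartbeats 1000000 in
lemma part1_min {q q' γ m : ℝ} (hq : 1 < q) (hq' : 1 < q') (hconj : 1/q + 1/q' = 1)
    (hγ : 0 < γ) {Freal F' : ℝ → ℝ}
    (hgrad : ∀ x ∈ Set.Ici (0:ℝ), ∀ y ∈ Set.Ici (0:ℝ), Freal x + F' x * (y - x) ≤ Freal y)
    (w : Fin 4 → ℝ) (hm : m ≤ γ * F' 0) (hQ : 0 ≤ Qfun q q' γ F' m w 0 0) :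
    ∀ (p : ℝ) (v : Fin 4 → ℝ), 0 ≤ p → v ∈ Kset → (p = 0 → v = 0) →
      γ * Freal 0 + (m ^ 2 + ∑ i, (w i) ^ 2) / 2
        ≤ γ * (nrm4 v ^ q / (q * p ^ (q-1)) + Freal p)
          + ((m - p) ^ 2 + ∑ i, (w i - v i) ^ 2) / 2 := by
  intro p v hp hv hpv
  rcases hp.eq_or_lt with h0 | h0
  · have hv0 : v = 0 := hpv h0.symm
    subst hv0
    rw [← h0]
    have hn0 : nrm4 (0 : Fin 4 → ℝ) = 0 := by simp [nrm4]
    rw [hn0, Real.zero_rpow (by linarith : q ≠ 0), zero_div]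
    apply le_of_eq
    simp
  · set c := nrm4 (PK w) with hcdef
    have hc : 0 ≤ c := nrm4_nonneg _
    set r := nrm4 v with hrdef
    have hr : 0 ≤ r := nrm4_nonneg _
    have hA := part1_bound hq hq' hconj hγ w hm hQ
    have hY := young_gen hq hq' hconj (γ := γ) hγ h0 hc hr
    have hw : ∑ i, w i * v i ≤ c * r := by
      have e : ∑ i, w i * v i
          = (∑ i, (w i - PK w i) * v i) + ∑ i, PK w i * v i := by
        simp only [Fin.sum_univ_four]; ring
      rw [e]
      have := sum_wPK_v_nonpos w v hv
      have := nrm4_CS (PK w) v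
      rw [← hcdef, ← hrdef] at this
      linarith
    have h2 : ∑ i, (w i - v i) ^ 2 = (∑ i, (w i) ^ 2) - 2 * (∑ i, w i * v i) + r ^ 2 := by
      rw [hrdef, nrm4_sq]
      simp only [Fin.sum_univ_four]; ring
    have hgr : γ * Freal 0 + γ * (F' 0 * (p - 0)) ≤ γ * Freal p := by
      have := mul_le_mul_of_nonneg_left
        (hgrad 0 Set.self_mem_Ici p (Set.mem_Ici.2 hp)) hγ.le
      rw [mul_add] at this; exact this
    have hpA : p * (γ ^ (1-q') * c ^ q' / q') ≤ p * (γ * F' 0 - m) :=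
      mul_le_mul_of_nonneg_left hA hp
    have hexp1 : p * (γ * F' 0 - m) = γ * (F' 0 * (p - 0)) - m * p := by ring
    have hexp2 : (m - p) ^ 2 = m ^ 2 - 2 * (m * p) + p ^ 2 := by ring
    have hee : γ * (r ^ q / (q * p ^ (q-1))) = γ * r ^ q / (q * p ^ (q-1)) := by ring
    rw [mul_add γ]
    nlinarith [hY, hw, h2, hgr, hpA, hexp1, hexp2, hee, sq_nonneg p, sq_nonneg r]

lemma rhs_top {γ : ℝ} (hγ : 0 < γ) (x : EReal) (hx : x = ⊤) (c : ℝ) (L : EReal) :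
    L ≤ (γ : EReal) * x + (c : EReal) := by
  rw [hx, EReal.coe_mul_top_of_pos hγ, EReal.top_add_coe]
  exact le_top

lemma ereal_reduce {q γ m : ℝ} (hq : 1 < q) (hγ : 0 < γ) (Freal : ℝ → ℝ)
    (w : Fin 4 → ℝ) (Lr : ℝ)
    (hmain : ∀ (p : ℝ) (v : Fin 4 → ℝ), 0 ≤ p → v ∈ Kset → (p = 0 → v = 0) →
      Lr ≤ γ * (nrm4 v ^ q / (q * p ^ (q-1)) + Freal p)
        + ((m - p) ^ 2 + ∑ i, (w i - v i) ^ 2) / 2)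
    (z : ℝ × (Fin 4 → ℝ)) :
    ((Lr : ℝ) : EReal) ≤ (γ : EReal)
        * (bhat q z.1 z.2 + (if 0 ≤ z.1 then ((Freal z.1 : ℝ) : EReal) else ⊤))
      + (((m - z.1) ^ 2 + ∑ i, (w i - z.2 i) ^ 2) / 2 : ℝ) := by
  have hind_ne_bot : (if z.2 ∈ Kset then (0 : EReal) else ⊤) ≠ ⊥ := by
    by_cases h : z.2 ∈ Kset <;> simp [h]
  have hif_ne_bot : (if 0 ≤ z.1 then ((Freal z.1 : ℝ) : EReal) else ⊤) ≠ ⊥ := by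
    by_cases h : 0 ≤ z.1 <;> simp [h]
  rcases lt_trichotomy z.1 0 with hz1 | hz1 | hz1
  · -- z.1 < 0 : bfun = ⊤
    apply rhs_top hγ
    have hb : bfun q z.1 z.2 = ⊤ := by
      rw [bfun, if_neg (by linarith), if_neg (by rintro ⟨h, -⟩; linarith)]
    rw [bhat, hb, EReal.top_add_of_ne_bot hind_ne_bot, EReal.top_add_of_ne_bot hif_ne_bot]
  · -- z.1 = 0
    by_cases hz2 : z.2 = 0
    · -- z = (0, 0)
      have hb : bhat q z.1 z.2 = 0 := by
        rw [bhat, bfun, if_neg (by rw [hz1]; exact lt_irrefl 0),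
          if_pos ⟨hz1, hz2⟩, if_pos (by rw [hz2]; exact ⟨le_rfl, le_rfl, le_rfl, le_rfl⟩)]
        simp
      rw [hb, zero_add, if_pos hz1.ge, ← EReal.coe_mul, ← EReal.coe_add,
        EReal.coe_le_coe_iff]
      have key := hmain 0 0 le_rfl ⟨le_rfl, le_rfl, le_rfl, le_rfl⟩ (fun _ => rfl)
      have hn0 : nrm4 (0 : Fin 4 → ℝ) = 0 := by simp [nrm4]
      rw [hn0, Real.zero_rpow (by linarith : q ≠ 0), zero_div] at key
      calc Lr ≤ γ * (0 + Freal 0) + ((m - 0) ^ 2 + ∑ i, (w i - (0:ℝ)) ^ 2) / 2 := key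
        _ = γ * Freal z.1 + ((m - z.1) ^ 2 + ∑ i, (w i - z.2 i) ^ 2) / 2 := by
            rw [hz1, hz2]; simp
    · -- z.1 = 0, z.2 ≠ 0 : bfun = ⊤
      apply rhs_top hγ
      have hb : bfun q z.1 z.2 = ⊤ := by
        rw [bfun, if_neg (by rw [hz1]; exact lt_irrefl 0),
          if_neg (by rintro ⟨-, h⟩; exact hz2 h)]
      rw [bhat, hb, EReal.top_add_of_ne_bot hind_ne_bot, EReal.top_add_of_ne_bot hif_ne_bot]
  · -- 0 < z.1
    by_cases hK : z.2 ∈ Kset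
    · have hb : bhat q z.1 z.2
          = ((nrm4 z.2 ^ q / (q * z.1 ^ (q - 1)) : ℝ) : EReal) := by
        rw [bhat, bfun, if_pos hz1, if_pos hK, add_zero]
      rw [hb, if_pos hz1.le, ← EReal.coe_add, ← EReal.coe_mul, ← EReal.coe_add,
        EReal.coe_le_coe_iff]
      exact hmain z.1 z.2 hz1.le hK (fun h => absurd h (by linarith))
    · apply rhs_top hγ
      have hb : bfun q z.1 z.2 = ((nrm4 z.2 ^ q / (q * z.1 ^ (q - 1)) : ℝ) : EReal) := by
        rw [bfun, if_pos hz1]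
      rw [bhat, hb, if_neg hK, EReal.coe_add_top, EReal.top_add_of_ne_bot hif_ne_bot]

/-- computation of `prox_{γφ}` for `φ(m,w) = F(m) + b̂(m,w)`
(with `F` convex on `[0,∞)`, differentiable with finite right derivative at 0,
`+∞` on the negatives): if `m ≤ γF'(0)` and `Q_{m,w}(0,0) ≥ 0` the prox is `(0,0)`;
otherwise it is `(p*, v_{m,w}(p*,0))` where `p* > 0` is the unique root of
`Q_{m,w}(·,0)` in the domain `D(m)`. -/
theorem stmt12 (q q' γ : ℝ) (hq : 1 < q) (hconj : 1 / q + 1 / q' = 1) (hγ : 0 < γ)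
    (Freal F' : ℝ → ℝ)
    (hFconv : ConvexOn ℝ (Set.Ici 0) Freal)
    (hFder : ∀ p ∈ Set.Ici (0 : ℝ), HasDerivWithinAt Freal (F' p) (Set.Ici 0) p)
    (m : ℝ) (w : Fin 4 → ℝ) :
    (m ≤ γ * F' 0 ∧ 0 ≤ Qfun q q' γ F' m w 0 0 →
      ∀ z : ℝ × (Fin 4 → ℝ),
        (γ : EReal) * (bhat q 0 0 + ((Freal 0 : ℝ) : EReal))
            + (((m - 0) ^ 2 + ∑ i, (w i - 0) ^ 2) / 2 : ℝ)
          ≤ (γ : EReal) * (bhat q z.1 z.2 + (if 0 ≤ z.1 then ((Freal z.1 : ℝ) : EReal) else ⊤))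
            + (((m - z.1) ^ 2 + ∑ i, (w i - z.2 i) ^ 2) / 2 : ℝ))
    ∧ (¬ (m ≤ γ * F' 0 ∧ 0 ≤ Qfun q q' γ F' m w 0 0) →
      ∃ p : ℝ, 0 < p ∧ m ≤ p + γ * F' p ∧ Qfun q q' γ F' m w p 0 = 0 ∧
        (∀ p' : ℝ, 0 ≤ p' → m ≤ p' + γ * F' p' → Qfun q q' γ F' m w p' 0 = 0 → p' = p) ∧
        ∀ z : ℝ × (Fin 4 → ℝ),
          (γ : EReal) * (bhat q p (vfun q q' γ F' m w p 0) + ((Freal p : ℝ) : EReal))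
              + (((m - p) ^ 2 + ∑ i, (w i - vfun q q' γ F' m w p 0 i) ^ 2) / 2 : ℝ)
            ≤ (γ : EReal) * (bhat q z.1 z.2 + (if 0 ≤ z.1 then ((Freal z.1 : ℝ) : EReal) else ⊤))
              + (((m - z.1) ^ 2 + ∑ i, (w i - z.2 i) ^ 2) / 2 : ℝ)) := by
  have hq0 : (0:ℝ) < q := by linarith
  obtain ⟨hq', hqq'⟩ := conj_facts hq hconj
  have hgrad := grad_ineq hFconv hFder
  constructor
  · rintro ⟨hm, hQ⟩ z
    have hb0 : bhat q 0 0 = 0 := by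
      rw [bhat, bfun, if_neg (lt_irrefl (0:ℝ)), if_pos ⟨rfl, rfl⟩]
      simp [Kset]
    rw [hb0, zero_add, ← EReal.coe_mul, ← EReal.coe_add]
    apply ereal_reduce hq hγ
    intro p v hp hv hpv
    have key := part1_min hq hq' hconj hγ hgrad w hm hQ p v hp hv hpv
    simpa using key
  · intro hneg
    obtain ⟨p, hppos, hBle, hQp, huniq⟩ := exists_root hq hq' hconj hγ hFconv hFder w hneg
    have hB : 0 ≤ p + γ * F' p - m := by linarith
    obtain ⟨lam, hlam0, hlam1, hvfun, hii, hiii⟩ := root_facts hq hq' hconj hγ w hppos hB hQp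
    refine ⟨p, hppos, hBle, hQp, huniq, ?_⟩
    intro z
    have hvK : vfun q q' γ F' m w p 0 ∈ Kset := by
      rw [hvfun]; exact smul_mem_Kset lam hlam0 (PK_mem_Kset w)
    have hbh : bhat q p (vfun q q' γ F' m w p 0)
        = ((nrm4 (vfun q q' γ F' m w p 0) ^ q / (q * p ^ (q - 1)) : ℝ) : EReal) := by
      rw [bhat, bfun, if_pos hppos, if_pos hvK, add_zero]
    rw [hbh, ← EReal.coe_add, ← EReal.coe_mul, ← EReal.coe_add]
    apply ereal_reduce hq hγ
    intro pz v hpz hvz hpvz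
    have key := key_min hq hq' hconj hγ hgrad w hppos hlam0 hlam1 hii hiii hpz hvz hpvz
    have hnv : nrm4 (vfun q q' γ F' m w p 0) = lam * nrm4 (PK w) := by
      rw [hvfun]; exact nrm4_smul lam hlam0 (PK w)
    have hsum : ∑ i, (w i - vfun q q' γ F' m w p 0 i) ^ 2
        = ∑ i, (w i - lam * PK w i) ^ 2 := by
      simp only [hvfun]
    rw [hnv, hsum]
    exact key
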